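/- Let X be a random variable on feature space 𝒳 and Y a random variable on a finite label space 𝒴 with |𝒴| = C. Let U be uniform on 𝒴 and Z be Bernoulli(ρ) for ρ ∈ [0,1], with U and Z independent of (X,Y) and of each other. Define Y_ρ = Z·U + (1−Z)·Y (i.e., Y_ρ = U if Z = 1 and Y_ρ = Y if Z = 0). Then the Bayes error rates satisfy R*_{X,Y_ρ} = R*_{X,Y} + ρ(1 − 1/C − R*_{X,Y}). -/
import Mathlib


open MeasureTheory Finset

/-- The Bayes error rate of a distribution `μ` over the feature space with
conditional label probabilities `η x y = p(y|x)`: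
`R* = E_X[1 - max_y p(y|x)]`. -/
noncomputable def bayesError {𝒳 : Type*} [MeasurableSpace 𝒳] (μ : Measure 𝒳)
    {𝒴 : Type*} [Fintype 𝒴] [Nonempty 𝒴] (η : 𝒳 → 𝒴 → ℝ) : ℝ :=
  ∫ x, (1 - Finset.univ.sup' Finset.univ_nonempty (fun y => η x y)) ∂μ

lemma sup'_affine {𝒴 : Type*} [Fintype 𝒴] [Nonempty 𝒴] (f : 𝒴 → ℝ) (c d : ℝ)
    (hc : 0 ≤ c) :
    Finset.univ.sup' Finset.univ_nonempty (fun y => c * f y + d)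
      = c * Finset.univ.sup' Finset.univ_nonempty f + d := by
  apply le_antisymm
  · apply Finset.sup'_le
    intro y _
    have : f y ≤ Finset.univ.sup' Finset.univ_nonempty f :=
      Finset.le_sup' f (Finset.mem_univ y)
    nlinarith
  · obtain ⟨y, -, hy⟩ := Finset.exists_mem_eq_sup' Finset.univ_nonempty f
    rw [hy]
    exact Finset.le_sup' (fun y => c * f y + d) (Finset.mem_univ y)

/-- Label-flipping lemma: replacing the label by an independent uniform label with
probability `ρ` changes the conditional probabilities to `(1-ρ) p(y|x) + ρ/C`, and
the Bayes error becomes `R* + ρ (1 - 1/C - R*)`. -/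
theorem label_flipping_bayes_error
    {𝒳 : Type*} [MeasurableSpace 𝒳] (μ : Measure 𝒳) [IsProbabilityMeasure μ]
    {𝒴 : Type*} [Fintype 𝒴] [Nonempty 𝒴] (η : 𝒳 → 𝒴 → ℝ)
    (hη0 : ∀ x y, 0 ≤ η x y) (hη1 : ∀ x, ∑ y : 𝒴, η x y = 1)
    (hInt : Integrable (fun x => Finset.univ.sup' Finset.univ_nonempty (fun y => η x y)) μ)
    (ρ : ℝ) (hρ : ρ ∈ Set.Icc (0:ℝ) 1) :
    bayesError μ (fun x y => (1 - ρ) * η x y + ρ / Fintype.card 𝒴)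
      = bayesError μ η + ρ * (1 - 1 / Fintype.card 𝒴 - bayesError μ η) := by
  obtain ⟨h0, h1⟩ := hρ
  have hc : (0:ℝ) ≤ 1 - ρ := by linarith
  unfold bayesError
  have key : ∀ x, (1 - Finset.univ.sup' Finset.univ_nonempty
      (fun y => (1 - ρ) * η x y + ρ / Fintype.card 𝒴))
      = (1 - ρ) * (1 - Finset.univ.sup' Finset.univ_nonempty (fun y => η x y))
        + (ρ * (1 - 1 / Fintype.card 𝒴)) := by
    intro x
    rw [sup'_affine (fun y => η x y) (1 - ρ) (ρ / Fintype.card 𝒴) hc]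
    have hC : (Fintype.card 𝒴 : ℝ) ≠ 0 := by
      exact_mod_cast Fintype.card_ne_zero
    field_simp
    ring
  simp_rw [key]
  have hInt' : Integrable
      (fun x => (1 - ρ) * (1 - Finset.univ.sup' Finset.univ_nonempty (fun y => η x y))) μ :=
    ((integrable_const (1:ℝ)).sub hInt).const_mul _
  rw [integral_add hInt' (integrable_const _), integral_const,
    integral_const_mul, integral_sub (integrable_const _) hInt, integral_const]
  simp [integral_sub (integrable_const (1:ℝ)) hInt]
  ring
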